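/- Let a > 1 be real. Then for every real N > 0, log₂ N + (log₂ a)/N ≥ log₂(ln a) + (log₂ a)/(ln a); that is, the function N ↦ log₂ N + (log₂ a)/N on (0,∞) attains its minimum at N = ln a. -/

import Mathlib

/-- For `a > 1`, the function `N ↦ log₂ N + log₂ a / N` on `(0,∞)` attains
its minimum at `N = ln a`. -/
theorem stmt_6 (a : ℝ) (ha : 1 < a) (N : ℝ) (hN : 0 < N) :
    Real.logb 2 N + Real.logb 2 a / N ≥
      Real.logb 2 (Real.log a) + Real.logb 2 a / Real.log a := by
  have hL : 0 < Real.log a := Real.log_pos ha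
  have hln2 : 0 < Real.log 2 := Real.log_pos one_lt_two
  set L := Real.log a with hLdef
  have key : Real.log L - Real.log N ≤ L / N - 1 := by
    have h := Real.log_le_sub_one_of_pos (x := L / N) (div_pos hL hN)
    rwa [Real.log_div hL.ne' hN.ne'] at h
  simp only [Real.logb, ge_iff_le]
  have main : Real.log L + 1 ≤ Real.log N + L / N := by
    have h1 : 1 - L / N ≤ Real.log N - Real.log L := by linarith
    linarith
  rw [div_div, div_div, show Real.log a = L from hLdef.symm,
    show L / (Real.log 2 * L) = 1 / Real.log 2 by field_simp,
    ← add_div, show L / (Real.log 2 * N) = (L/N) / Real.log 2 by ring,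
    ← add_div]
  exact div_le_div_of_nonneg_right main hln2.le
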